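/- Let X ⊆ V be a finite set of vertices each with an open interval, and suppose the hyperedges restricted to X have pairwise disjoint supports, with each hyperedge being a single witness pair {u_i, v_i} (intersecting intervals, one leftmost). Then for any error measure k ∈ {k_#, k_M, k_h} and any deterministic algorithm, its competitive ratio is at least min{1 + k/|OPT|, 2}: on an instance consisting of n disjoint copies of the pair gadget (I_v = (0,2) with ŵ_v = w_v = 1.5, I_u = (1,3) with ŵ_u = 1.5), for any deterministic strategy the adversary can force, on k of the copies, two queries against an optimum of one query with one prediction error per such copy. -/
import Mathlib


open Finset

/-- Lower endpoint of vertex `v`'s interval after querying the set `Q`. -/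
def qlo {V : Type*} [DecidableEq V] (L w : V → ℝ) (Q : Finset V) (v : V) : ℝ :=
  if v ∈ Q then w v else L v

/-- Upper endpoint of vertex `v`'s interval after querying the set `Q`. -/
def qhi {V : Type*} [DecidableEq V] (U w : V → ℝ) (Q : Finset V) (v : V) : ℝ :=
  if v ∈ Q then w v else U v

/-- The query set `Q` suffices to orient the hyperedge `S`: some vertex of `S`
has its (updated) interval weakly below all other (updated) intervals of `S`. -/
def Solves {V : Type*} [DecidableEq V] (L U w : V → ℝ) (Q : Finset V) (S : Finset V) : Prop :=
  ∃ m ∈ S, ∀ u ∈ S, u ≠ m → qhi U w Q m ≤ qlo L w Q u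

/-- A vertex is mandatory (for weights `w`) if it belongs to every query set
that orients all hyperedges of `E`. -/
def Mandatory {V : Type*} [DecidableEq V] (L U w : V → ℝ) (E : Finset (Finset V)) (v : V) : Prop :=
  ∀ Q : Finset V, (∀ S ∈ E, Solves L U w Q S) → v ∈ Q

open scoped Classical in
/-- The two-interval gadget `I_v = (0,2)`, `I_u = (1,3)`, both predicted
weights `1.5` (`false` is `v`, `true` is `u`): whichever vertex a deterministic
algorithm queries first, the adversary can choose weights such that every
feasible query set containing the first-queried vertex must contain both
vertices, while the other vertex alone is feasible, and the resulting instance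
has `k_# = k_M = k_h = 1`. -/
theorem stmt17 (L U pw : Bool → ℝ)
    (hL : L false = 0 ∧ U false = 2 ∧ L true = 1 ∧ U true = 3)
    (hpw : ∀ i : Bool, pw i = 1.5) :
    ∀ f : Bool, ∃ w : Bool → ℝ,
      (∀ i : Bool, w i ∈ Set.Ioo (L i) (U i)) ∧
      w f = 1.5 ∧
      (∀ Q : Finset Bool, Solves L U w Q Finset.univ → f ∈ Q → Finset.univ ⊆ Q) ∧
      Solves L U w {!f} Finset.univ ∧
      (Finset.univ.filter fun i : Bool => w i ≠ pw i).card = 1 ∧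
      (symmDiff (Finset.univ.filter (Mandatory L U pw {Finset.univ}))
                (Finset.univ.filter (Mandatory L U w {Finset.univ}))).card = 1 ∧
      (∑ v : Bool, (Finset.univ.filter (fun u : Bool => u ≠ v ∧
        ((pw v ≤ L u ∧ L u < w v) ∨ (w v ≤ L u ∧ L u < pw v) ∨
         (w v < U u ∧ U u ≤ pw v) ∨ (pw v < U u ∧ U u ≤ w v)))).card) = 1 := by

  obtain ⟨hL0, hU0, hL1, hU1⟩ := hL
  -- both vertices mandatory under the predictions
  have hpwMand : ∀ Q : Finset Bool, Solves L U pw Q Finset.univ → false ∈ Q ∧ true ∈ Q := by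
    intro Q hS
    obtain ⟨m, -, h⟩ := hS
    by_cases hF : false ∈ Q <;> by_cases hT : true ∈ Q
    · exact ⟨hF, hT⟩
    all_goals exfalso
    all_goals cases m
    all_goals first
      | (have := h true (Finset.mem_univ true) (Ne.symm Bool.false_ne_true)
         simp [qhi, qlo, hF, hT, hpw, hL0, hU0, hL1, hU1] at this
         try norm_num at this
         done)
      | (have := h false (Finset.mem_univ false) Bool.false_ne_true
         simp [qhi, qlo, hF, hT, hpw, hL0, hU0, hL1, hU1] at this
         try norm_num at this
         done)
  have hMpw : (Finset.univ.filter (Mandatory L U pw {Finset.univ})) = Finset.univ := by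
    ext i
    simp only [mem_filter, mem_univ, true_and, iff_true]
    intro Q hQ
    have h2 := hpwMand Q (hQ _ (by simp))
    cases i
    · exact h2.1
    · exact h2.2
  intro f
  cases f
  · -- f = false : adversary sets w true = 2.5
    set w : Bool → ℝ := fun b => if b then 2.5 else 1.5 with hw
    have hwt : w true = 2.5 := rfl
    have hwf : w false = 1.5 := rfl
    have hsolve : Solves L U w {!false} Finset.univ := by
      refine ⟨false, by simp, ?_⟩
      intro u hu hne
      cases u
      · simp at hne
      · simp [qhi, qlo, hU0, hwt]
        norm_num
    have hwMand : ∀ Q : Finset Bool, Solves L U w Q Finset.univ → true ∈ Q := by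
      intro Q hS
      by_contra hT
      obtain ⟨m, -, h⟩ := hS
      by_cases hF : false ∈ Q
      all_goals cases m
      all_goals first
        | (have := h true (Finset.mem_univ true) (Ne.symm Bool.false_ne_true)
           simp [qhi, qlo, hF, hT, hwt, hwf, hL0, hU0, hL1, hU1] at this
           try norm_num at this
           done)
        | (have := h false (Finset.mem_univ false) Bool.false_ne_true
           simp [qhi, qlo, hF, hT, hwt, hwf, hL0, hU0, hL1, hU1] at this
           try norm_num at this
           done)
    have hnotMand : ¬ Mandatory L U w {Finset.univ} false := by
      intro hman
      have := hman {true} (by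
        intro S hS
        simp only [Finset.mem_singleton] at hS
        subst hS
        simpa using hsolve)
      simp at this
    have hMw : (Finset.univ.filter (Mandatory L U w {Finset.univ})) = {true} := by
      ext i
      cases i
      · simp only [mem_filter, mem_univ, true_and, Finset.mem_singleton]
        exact iff_of_false hnotMand (by simp)
      · simp only [mem_filter, mem_univ, true_and, Finset.mem_singleton, iff_true]
        intro Q hQ
        exact hwMand Q (hQ _ (by simp))
    refine ⟨w, ?_, hwf, ?_, hsolve, ?_, ?_, ?_⟩
    · intro i
      cases i <;> constructor <;>
        simp [hwt, hwf, hL0, hU0, hL1, hU1] <;> norm_num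
    · intro Q hS hfQ x _
      cases x
      · exact hfQ
      · exact hwMand Q hS
    · have : (Finset.univ.filter fun i : Bool => w i ≠ pw i) = {true} := by
        ext i
        cases i <;> simp [hwt, hwf, hpw] <;> norm_num
      rw [this]
      rfl
    · rw [hMpw, hMw]
      have : symmDiff (Finset.univ : Finset Bool) {true} = {false} := by
        ext i
        cases i <;> simp [Finset.mem_symmDiff]
      rw [this]
      rfl
    · rw [Fintype.sum_bool]
      have h1 : (Finset.univ.filter (fun u : Bool => u ≠ true ∧
          ((pw true ≤ L u ∧ L u < w true) ∨ (w true ≤ L u ∧ L u < pw true) ∨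
           (w true < U u ∧ U u ≤ pw true) ∨ (pw true < U u ∧ U u ≤ w true)))) = {false} := by
        ext u
        cases u <;> simp [hwt, hwf, hpw, hL0, hU0, hL1, hU1] <;> norm_num
      have h2 : (Finset.univ.filter (fun u : Bool => u ≠ false ∧
          ((pw false ≤ L u ∧ L u < w false) ∨ (w false ≤ L u ∧ L u < pw false) ∨
           (w false < U u ∧ U u ≤ pw false) ∨ (pw false < U u ∧ U u ≤ w false)))) = ∅ := by
        ext u
        cases u <;> simp [hwt, hwf, hpw, hL0, hU0, hL1, hU1] <;> norm_num
      rw [h1, h2]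
      rfl
  · -- f = true : adversary sets w false = 0.5
    set w : Bool → ℝ := fun b => if b then 1.5 else 0.5 with hw
    have hwt : w true = 1.5 := rfl
    have hwf : w false = 0.5 := rfl
    have hsolve : Solves L U w {!true} Finset.univ := by
      refine ⟨false, by simp, ?_⟩
      intro u hu hne
      cases u
      · simp at hne
      · simp [qhi, qlo, hL1, hwf]
        norm_num
    have hwMand : ∀ Q : Finset Bool, Solves L U w Q Finset.univ → false ∈ Q := by
      intro Q hS
      by_contra hF
      obtain ⟨m, -, h⟩ := hS
      by_cases hT : true ∈ Q
      all_goals cases m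
      all_goals first
        | (have := h true (Finset.mem_univ true) (Ne.symm Bool.false_ne_true)
           simp [qhi, qlo, hF, hT, hwt, hwf, hL0, hU0, hL1, hU1] at this
           try norm_num at this
           done)
        | (have := h false (Finset.mem_univ false) Bool.false_ne_true
           simp [qhi, qlo, hF, hT, hwt, hwf, hL0, hU0, hL1, hU1] at this
           try norm_num at this
           done)
    have hnotMand : ¬ Mandatory L U w {Finset.univ} true := by
      intro hman
      have := hman {false} (by
        intro S hS
        simp only [Finset.mem_singleton] at hS
        subst hS
        simpa using hsolve)
      simp at this
    have hMw : (Finset.univ.filter (Mandatory L U w {Finset.univ})) = {false} := by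
      ext i
      cases i
      · simp only [mem_filter, mem_univ, true_and, Finset.mem_singleton, iff_true]
        intro Q hQ
        exact hwMand Q (hQ _ (by simp))
      · simp only [mem_filter, mem_univ, true_and, Finset.mem_singleton]
        exact iff_of_false hnotMand (by simp)
    refine ⟨w, ?_, hwt, ?_, hsolve, ?_, ?_, ?_⟩
    · intro i
      cases i <;> constructor <;>
        simp [hwt, hwf, hL0, hU0, hL1, hU1] <;> norm_num
    · intro Q hS hfQ x _
      cases x
      · exact hwMand Q hS
      · exact hfQ
    · have : (Finset.univ.filter fun i : Bool => w i ≠ pw i) = {false} := by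
        ext i
        cases i <;> simp [hwt, hwf, hpw] <;> norm_num
      rw [this]
      rfl
    · rw [hMpw, hMw]
      have : symmDiff (Finset.univ : Finset Bool) {false} = {true} := by
        ext i
        cases i <;> simp [Finset.mem_symmDiff]
      rw [this]
      rfl
    · rw [Fintype.sum_bool]
      have h1 : (Finset.univ.filter (fun u : Bool => u ≠ true ∧
          ((pw true ≤ L u ∧ L u < w true) ∨ (w true ≤ L u ∧ L u < pw true) ∨
           (w true < U u ∧ U u ≤ pw true) ∨ (pw true < U u ∧ U u ≤ w true)))) = ∅ := by
        ext u
        cases u <;> simp [hwt, hwf, hpw, hL0, hU0, hL1, hU1] <;> norm_num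
      have h2 : (Finset.univ.filter (fun u : Bool => u ≠ false ∧
          ((pw false ≤ L u ∧ L u < w false) ∨ (w false ≤ L u ∧ L u < pw false) ∨
           (w false < U u ∧ U u ≤ pw false) ∨ (pw false < U u ∧ U u ≤ w false)))) = {true} := by
        ext u
        cases u <;> simp [hwt, hwf, hpw, hL0, hU0, hL1, hU1] <;> norm_num
      rw [h1, h2]
      rfl
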